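/- Let G be a torsion-free group that contains ℤ² as a finite-index subgroup and in which every nontrivial element is virtually central (its centraliser has finite index). Then G is isomorphic to ℤ². -/

import Mathlib

open Subgroup
open scoped commutatorElement

section Aux

variable {G : Type*} [Group G]

private lemma comm_mul_central_left {z : G} (hz : z ∈ Subgroup.center G) (g h : G) :
    ⁅g * z, h⁆ = ⁅g, h⁆ := by
  have hzh : z * h * z⁻¹ = h := by
    rw [← Subgroup.mem_center_iff.mp hz h, mul_inv_cancel_right]
  calc ⁅g * z, h⁆ = g * (z * h * z⁻¹) * g⁻¹ * h⁻¹ := by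
        rw [commutatorElement_def]; group
    _ = g * h * g⁻¹ * h⁻¹ := by rw [hzh]
    _ = ⁅g, h⁆ := (commutatorElement_def g h).symm

private lemma comm_mul_central_right {w : G} (hw : w ∈ Subgroup.center G) (g h : G) :
    ⁅g, h * w⁆ = ⁅g, h⁆ := by
  have hwg : w * g⁻¹ * w⁻¹ = g⁻¹ := by
    rw [← Subgroup.mem_center_iff.mp hw g⁻¹, mul_inv_cancel_right]
  calc ⁅g, h * w⁆ = g * h * (w * g⁻¹ * w⁻¹) * h⁻¹ := by
        rw [commutatorElement_def]; group
    _ = g * h * g⁻¹ * h⁻¹ := by rw [hwg]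
    _ = ⁅g, h⁆ := (commutatorElement_def g h).symm

/-- the commutator only depends on cosets mod the center -/
private lemma comm_out_eq (Z : Subgroup G) (hZ : Z = Subgroup.center G) (g h : G) :
    ⁅((QuotientGroup.mk g : G ⧸ Z)).out, ((QuotientGroup.mk h : G ⧸ Z)).out⁆ = ⁅g, h⁆ := by
  subst hZ
  set Z := Subgroup.center G
  have hg : g⁻¹ * ((QuotientGroup.mk g : G ⧸ Z)).out ∈ Z := by
    rw [← QuotientGroup.eq]
    exact (QuotientGroup.out_eq' _).symm
  have hh : h⁻¹ * ((QuotientGroup.mk h : G ⧸ Z)).out ∈ Z := by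
    rw [← QuotientGroup.eq]
    exact (QuotientGroup.out_eq' _).symm
  have eg : ((QuotientGroup.mk g : G ⧸ Z)).out = g * (g⁻¹ * ((QuotientGroup.mk g : G ⧸ Z)).out) := by
    rw [← mul_assoc, mul_inv_cancel, one_mul]
  have eh : ((QuotientGroup.mk h : G ⧸ Z)).out = h * (h⁻¹ * ((QuotientGroup.mk h : G ⧸ Z)).out) := by
    rw [← mul_assoc, mul_inv_cancel, one_mul]
  rw [eg, eh, comm_mul_central_left hg, comm_mul_central_right hh]

end Aux

/-- a torsion-free group containing `ℤ²` with finite index, all of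
whose nontrivial elements are virtually central, is isomorphic to `ℤ²`. -/
theorem virtually_Z2_all_virtually_central {G : Type*} [Group G]
    (htf : ∀ g : G, g ≠ 1 → ∀ n : ℕ, 0 < n → g ^ n ≠ 1)
    (H : Subgroup G) (hH : H.FiniteIndex)
    (hiso : Nonempty (H ≃* Multiplicative (ℤ × ℤ)))
    (hvc : ∀ g : G, g ≠ 1 → (Subgroup.centralizer {g} : Subgroup G).FiniteIndex) :
    Nonempty (G ≃* Multiplicative (ℤ × ℤ)) := by
  classical
  obtain ⟨e⟩ := hiso
  haveI := hH
  -- Step 1: G is generated by a finite set S.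
  haveI : AddGroup.FG (ℤ × ℤ) := Module.Finite.iff_addGroup_fg.mp inferInstance
  haveI : Group.FG H :=
    Group.fg_of_surjective (f := e.symm.toMonoidHom) e.symm.surjective
  obtain ⟨T, hTclos, hTfin⟩ := Group.fg_iff.mp ‹Group.FG H›
  obtain ⟨R, hR, hR1⟩ := H.exists_isComplement_right 1
  haveI : Finite (Quotient (QuotientGroup.rightRel H)) :=
    Finite.of_equiv _ (QuotientGroup.quotientRightRelEquivQuotientLeftRel H).symm
  haveI : Finite R := Finite.of_equiv _ (Subgroup.IsComplement.rightQuotientEquiv hR)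
  have hRfin : R.Finite := Set.toFinite R
  set S : Set G := (⇑H.subtype '' T) ∪ R with hS
  have hSfin : S.Finite := (hTfin.image _).union hRfin
  have hS0 : Subgroup.closure (⇑H.subtype '' T : Set G) = H := by
    rw [← MonoidHom.map_closure H.subtype, hTclos, ← MonoidHom.range_eq_map,
      Subgroup.range_subtype]
  have hSclos : Subgroup.closure S = ⊤ := by
    rw [eq_top_iff]
    intro g _
    have hH_le : H ≤ Subgroup.closure S :=
      hS0 ▸ Subgroup.closure_mono Set.subset_union_left
    have hR_le : R ⊆ (Subgroup.closure S : Set G) :=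
      Set.Subset.trans Set.subset_union_right Subgroup.subset_closure
    have h1 : g * (Subgroup.IsComplement.toRightFun hR g : G)⁻¹ ∈ H :=
      Subgroup.IsComplement.mul_inv_toRightFun_mem hR g
    have h2 : (Subgroup.IsComplement.toRightFun hR g : G) ∈ Subgroup.closure S :=
      hR_le (Subgroup.IsComplement.toRightFun hR g).2
    have := (Subgroup.closure S).mul_mem (hH_le h1) h2
    rwa [inv_mul_cancel_right] at this
  -- Step 2: the center of G has finite index.
  haveI hKfi : (⨅ g : S, Subgroup.centralizer {(g : G)}).FiniteIndex := by
    haveI : Finite S := hSfin.to_subtype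
    refine Subgroup.finiteIndex_iInf fun g => ?_
    by_cases hg : (g : G) = 1
    · have : Subgroup.centralizer {(g : G)} = ⊤ := by
        rw [hg]
        ext x
        simp [Subgroup.mem_centralizer_singleton_iff]
      rw [this]
      infer_instance
    · exact hvc _ hg
  have hKle : (⨅ g : S, Subgroup.centralizer {(g : G)}) ≤ Subgroup.center G := by
    intro x hx
    rw [Subgroup.mem_center_iff]
    intro y
    have hy : y ∈ Subgroup.closure S := hSclos ▸ Subgroup.mem_top y
    have hsub : S ⊆ (Subgroup.centralizer {x} : Set G) := by
      intro s hs
      have h1 : x * s = s * x := Subgroup.mem_centralizer_singleton_iff.mp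
        (Subgroup.mem_iInf.mp hx ⟨s, hs⟩)
      exact SetLike.mem_coe.mpr (Subgroup.mem_centralizer_singleton_iff.mpr h1.symm)
    have := (Subgroup.closure_le _).mpr hsub hy
    exact (Subgroup.mem_centralizer_singleton_iff.mp this)
  haveI hZfi : (Subgroup.center G).FiniteIndex := Subgroup.finiteIndex_of_le hKle
  -- Step 3: the commutator set is finite, hence the commutator subgroup is finite,
  -- hence trivial by torsion-freeness, so G is commutative.
  have hcsfin : (commutatorSet G).Finite := by
    have hsub : commutatorSet G ⊆
        Set.range (fun p : (G ⧸ Subgroup.center G) × (G ⧸ Subgroup.center G) =>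
          ⁅p.1.out, p.2.out⁆) := by
      rintro x ⟨g, h, rfl⟩
      exact ⟨(QuotientGroup.mk g, QuotientGroup.mk h), comm_out_eq _ rfl g h⟩
    exact (Set.finite_range _).subset hsub
  haveI : Finite (commutatorSet G) := hcsfin.to_subtype
  haveI : Finite (commutator G) := inferInstance
  have hcomm : ∀ a b : G, a * b = b * a := by
    intro a b
    rw [← commutatorElement_eq_one_iff_mul_comm]
    by_contra hc
    have hmem : ⁅a, b⁆ ∈ commutator G :=
      Subgroup.commutator_mem_commutator (Subgroup.mem_top a) (Subgroup.mem_top b)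
    set x : commutator G := ⟨⁅a, b⁆, hmem⟩ with hxdef
    have hord : 0 < orderOf x := (isOfFinOrder_of_finite x).orderOf_pos
    have hpow : x ^ orderOf x = 1 := pow_orderOf_eq_one x
    have : (⁅a, b⁆ : G) ^ orderOf x = 1 := by
      have := congrArg (Subtype.val) hpow
      simpa only [Subgroup.coe_pow, OneMemClass.coe_one] using this
    exact htf _ hc _ hord this
  letI : CommGroup G := { (inferInstance : Group G) with mul_comm := hcomm }
  -- Step 4: the n-th power map (n = index of H) is an injective hom into H.
  haveI : H.Normal := ⟨fun a ha g => by
    rwa [mul_comm g a, mul_assoc, mul_inv_cancel, mul_one]⟩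
  set n : ℕ := H.index with hn
  have hn0 : 0 < n := Nat.pos_of_ne_zero hH.index_ne_zero
  have hmem : ∀ g : G, g ^ n ∈ H := fun g => H.pow_index_mem g
  set ψ : G →* Multiplicative (ℤ × ℤ) :=
    e.toMonoidHom.comp ((powMonoidHom n).codRestrict H hmem) with hψ
  have hψinj : Function.Injective ψ := by
    rw [injective_iff_map_eq_one]
    intro g hg
    by_contra hg1
    apply htf g hg1 n hn0
    have : ((powMonoidHom n).codRestrict H hmem g : G) = ((1 : H) : G) := by
      have : (powMonoidHom n).codRestrict H hmem g = 1 := e.injective (by simpa [hψ] using hg)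
      rw [this]
    simpa [powMonoidHom] using this
  -- Step 5: pass to additive language; the image of G in ℤ × ℤ is a full-rank subgroup.
  set ψ' : Additive G →+ ℤ × ℤ := MonoidHom.toAdditiveLeft ψ with hψ'
  have hψ'inj : Function.Injective ψ' := fun a b hab => hψinj hab
  set L : Additive G →ₗ[ℤ] ℤ × ℤ := ψ'.toIntLinearMap with hL
  have hLinj : Function.Injective L := hψ'inj
  -- the inclusion of H ≃ ℤ² into G, additively
  set j : (ℤ × ℤ) →+ Additive G :=
    MonoidHom.toAdditiveRight (H.subtype.comp e.symm.toMonoidHom) with hj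
  have hjinj : Function.Injective j := by
    intro a b hab
    exact e.symm.injective (Subtype.ext hab)
  set N : Submodule ℤ (ℤ × ℤ) := LinearMap.range L with hN
  set jL : (ℤ × ℤ) →ₗ[ℤ] N := L.rangeRestrict.comp j.toIntLinearMap with hjL
  have hjLinj : Function.Injective jL := by
    have h1 : Function.Injective L.rangeRestrict := fun a b hab => by
      apply hLinj
      exact congrArg Subtype.val hab
    exact h1.comp hjinj
  have hrank : Module.finrank ℤ N = 2 := by
    have h2 : Module.finrank ℤ (ℤ × ℤ) = 2 := by
      rw [Module.finrank_prod, Module.finrank_self]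
    have hle : Module.finrank ℤ N ≤ 2 := h2 ▸ N.finrank_le
    have hge : (2 : ℕ) ≤ Module.finrank ℤ N :=
      h2 ▸ LinearMap.finrank_le_finrank_of_injective hjLinj
    omega
  -- Step 6: N is free of rank 2, so G ≃ Additive G ≃ N ≃ ℤ × ℤ.
  have b : Module.Basis (Fin 2) ℤ N := Module.finBasisOfFinrankEq ℤ N hrank
  have e1 : Additive G ≃ₗ[ℤ] N := LinearEquiv.ofInjective L hLinj
  have e2 : N ≃ₗ[ℤ] (Fin 2 → ℤ) := b.equivFun
  have e3 : (Fin 2 → ℤ) ≃+ ℤ × ℤ :=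
    { piFinTwoEquiv (fun _ => ℤ) with map_add' := fun x y => rfl }
  have efinal : Additive G ≃+ ℤ × ℤ :=
    (e1.toAddEquiv.trans e2.toAddEquiv).trans e3
  exact ⟨MulEquiv.toAdditiveLeft.symm efinal⟩
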